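/- For all positive integers a₁, a₂, a₃ with 1/a₁+1/a₂+1/a₃ > 1, the rational number (a₁+a₂+a₃-1)!·a₁^{a₁}·a₂^{a₂}·a₃^{a₃}/(a₁!·a₂!·a₃!·(1/a₁+1/a₂+1/a₃-1)) is a positive integer. -/

import Mathlib

open Nat

noncomputable def E (a b c : ℕ) : ℚ :=
  (((a + b + c - 1)! : ℚ) * (a : ℚ) ^ a * (b : ℚ) ^ b * (c : ℚ) ^ c) /
    (((a)! : ℚ) * (b)! * (c)! * (1 / (a : ℚ) + 1 / (b : ℚ) + 1 / (c : ℚ) - 1))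

lemma E_swap12 (a b c : ℕ) : E a b c = E b a c := by
  unfold E
  rw [show b + a + c = a + b + c by ring]
  ring

lemma E_swap23 (a b c : ℕ) : E a b c = E a c b := by
  unfold E
  rw [show a + c + b = a + b + c by ring]
  ring

lemma case1 (p q : ℕ) (hp : 0 < p) (hq : 0 < q) :
    ∃ n : ℕ, 0 < n ∧ E 1 p q = n := by
  refine ⟨(p + q - 1).choose p * p ^ (p + 1) * q ^ q, ?_, ?_⟩
  · have h1 : p ≤ p + q - 1 := by omega
    exact Nat.mul_pos (Nat.mul_pos (Nat.choose_pos h1) (Nat.pow_pos hp))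
      (Nat.pow_pos hq)
  · unfold E
    have hp' : (p : ℚ) ≠ 0 := Nat.cast_ne_zero.2 hp.ne'
    have hq' : (q : ℚ) ≠ 0 := Nat.cast_ne_zero.2 hq.ne'
    have hpf : ((p)! : ℚ) ≠ 0 := Nat.cast_ne_zero.2 (Nat.factorial_ne_zero p)
    have hqf : ((q)! : ℚ) ≠ 0 := Nat.cast_ne_zero.2 (Nat.factorial_ne_zero q)
    have hs : 1 + p + q - 1 = p + q := by omega
    rw [hs]
    have hden : 1 / ((1:ℕ) : ℚ) + 1 / (p:ℚ) + 1 / (q:ℚ) - 1 = ((p:ℚ) + q) / ((p:ℚ) * q) := by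
      push_cast; field_simp; ring
    rw [hden]
    have key : (p + q)! * p ^ (p+1) * q ^ (q+1)
        = (p + q - 1).choose p * p ^ (p + 1) * q ^ q * ((p)! * (q)!) * (p + q) := by
      have h1 : p ≤ p + q - 1 := by omega
      have h2 : (p + q - 1).choose p * (p)! * (p + q - 1 - p)! = (p + q - 1)! :=
        Nat.choose_mul_factorial_mul_factorial h1
      have h3 : p + q - 1 - p = q - 1 := by omega
      rw [h3] at h2
      have h4 : (p + q)! = (p + q) * (p + q - 1)! := by
        conv_lhs => rw [show p + q = (p + q - 1) + 1 by omega]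
        rw [Nat.factorial_succ]
        congr 1
        omega
      have h5 : (q)! = q * (q - 1)! := by
        conv_lhs => rw [show q = (q - 1) + 1 by omega]
        rw [Nat.factorial_succ]
        congr 1
        omega
      rw [h4, ← h2, h5, pow_succ q q]
      ring
    have keyQ : ((p + q)! : ℚ) * p ^ (p+1) * q ^ (q+1)
        = ((p + q - 1).choose p : ℚ) * p ^ (p + 1) * q ^ q * ((p)! * (q)!) * ((p:ℚ) + q) := by
      exact_mod_cast congrArg (Nat.cast : ℕ → ℚ) key
    have hpq : ((p:ℚ) + q) ≠ 0 := by positivity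
    push_cast
    field_simp
    have keyQ2 : ((p + q)! : ℚ) * q = ((p + q - 1).choose p : ℚ) * ((p)! * (q)!) * ((p:ℚ) + q) := by
      have hQ : (q:ℚ) ^ q ≠ 0 := pow_ne_zero _ hq'
      have hP : (p:ℚ) ^ (p + 1) ≠ 0 := pow_ne_zero _ hp'
      apply mul_right_cancel₀ (mul_ne_zero hP hQ)
      linear_combination keyQ
    linear_combination (p:ℚ) ^ (p + 1) * keyQ2

lemma case22 (r : ℕ) (hr : 0 < r) :
    ∃ n : ℕ, 0 < n ∧ E 2 2 r = n := by
  refine ⟨4 * (r + 1) * (r + 2) * (r + 3) * r ^ (r + 1), by positivity, ?_⟩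
  unfold E
  have hr' : (r : ℚ) ≠ 0 := Nat.cast_ne_zero.2 hr.ne'
  have hrf : ((r)! : ℚ) ≠ 0 := Nat.cast_ne_zero.2 (Nat.factorial_ne_zero r)
  have hs : 2 + 2 + r - 1 = r + 3 := by omega
  rw [hs]
  have hden : 1 / ((2:ℕ) : ℚ) + 1 / ((2:ℕ):ℚ) + 1 / (r:ℚ) - 1 = 1 / (r:ℚ) := by
    push_cast; ring
  rw [hden]
  have key : (r + 3)! = (r + 3) * ((r + 2) * ((r + 1) * (r)!)) := by
    rw [Nat.factorial_succ, Nat.factorial_succ, Nat.factorial_succ]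
  have keyQ : ((r + 3)! : ℚ) = ((r:ℚ) + 3) * (((r:ℚ) + 2) * (((r:ℚ) + 1) * ((r)! : ℚ))) := by
    exact_mod_cast congrArg (Nat.cast : ℕ → ℚ) key
  push_cast
  field_simp
  rw [keyQ]
  ring

lemma oneDivLe (m k : ℕ) (hm : 0 < m) (h : m ≤ k) : 1 / (k:ℚ) ≤ 1 / (m:ℚ) :=
  one_div_le_one_div_of_le (by exact_mod_cast hm) (by exact_mod_cast h)

lemma sortedCase (a b c : ℕ) (ha : 0 < a) (hab : a ≤ b) (hbc : b ≤ c)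
    (hχ : 1 / (a : ℚ) + 1 / (b : ℚ) + 1 / (c : ℚ) > 1) :
    ∃ n : ℕ, 0 < n ∧ E a b c = n := by
  have hb : 0 < b := lt_of_lt_of_le ha hab
  have hc : 0 < c := lt_of_lt_of_le hb hbc
  rcases Nat.lt_or_ge a 2 with h2 | h2
  · interval_cases a
    exact case1 b c hb hc
  · have ha3 : a < 3 := by
      by_contra h
      push_neg at h
      have i1 : 1 / (a:ℚ) ≤ 1/3 := by
        have := oneDivLe 3 a (by norm_num : (0:ℕ) < _) h; simpa using this
      have i2 : 1 / (b:ℚ) ≤ 1/3 := by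
        have := oneDivLe 3 b (by norm_num : (0:ℕ) < _) (le_trans h hab); simpa using this
      have i3 : 1 / (c:ℚ) ≤ 1/3 := by
        have := oneDivLe 3 c (by norm_num : (0:ℕ) < _) (le_trans (le_trans h hab) hbc)
        simpa using this
      linarith
    have haa : a = 2 := by omega
    subst haa
    have hb4 : b < 4 := by
      by_contra h
      push_neg at h
      have i1 : 1 / ((2:ℕ):ℚ) = 1/2 := by norm_num
      have i2 : 1 / (b:ℚ) ≤ 1/4 := by
        have := oneDivLe 4 b (by norm_num : (0:ℕ) < _) h; simpa using this
      have i3 : 1 / (c:ℚ) ≤ 1/4 := by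
        have := oneDivLe 4 c (by norm_num : (0:ℕ) < _) (le_trans h hbc); simpa using this
      rw [i1] at hχ
      linarith
    interval_cases b
    · exact case22 c hc
    · have hc6 : c < 6 := by
        by_contra h
        push_neg at h
        have i1 : 1 / ((2:ℕ):ℚ) = 1/2 := by norm_num
        have i2 : 1 / ((3:ℕ):ℚ) = 1/3 := by norm_num
        have i3 : 1 / (c:ℚ) ≤ 1/6 := by
          have := oneDivLe 6 c (by norm_num : (0:ℕ) < _) h; simpa using this
        rw [i1, i2] at hχ
        linarith
      interval_cases c
      · exact ⟨1224720, by norm_num, by norm_num [E, Nat.factorial]⟩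
      · exact ⟨46448640, by norm_num, by norm_num [E, Nat.factorial]⟩
      · exact ⟨2551500000, by norm_num, by norm_num [E, Nat.factorial]⟩

theorem degLL_is_positive_integer (a₁ a₂ a₃ : ℕ) (h₁ : 0 < a₁) (h₂ : 0 < a₂) (h₃ : 0 < a₃)
    (hχ : 1 / (a₁ : ℚ) + 1 / (a₂ : ℚ) + 1 / (a₃ : ℚ) > 1) :
    ∃ n : ℕ, 0 < n ∧
      (((a₁ + a₂ + a₃ - 1)! : ℚ) * (a₁ : ℚ) ^ a₁ * (a₂ : ℚ) ^ a₂ * (a₃ : ℚ) ^ a₃) /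
          (((a₁)! : ℚ) * (a₂)! * (a₃)! *
            (1 / (a₁ : ℚ) + 1 / (a₂ : ℚ) + 1 / (a₃ : ℚ) - 1)) = n := by
  show ∃ n : ℕ, 0 < n ∧ E a₁ a₂ a₃ = n
  rcases le_total a₁ a₂ with h12 | h21 <;> rcases le_total a₂ a₃ with h23 | h32 <;>
    rcases le_total a₁ a₃ with h13 | h31 <;>
    first
      | exact sortedCase a₁ a₂ a₃ h₁ (by omega) (by omega) (by linarith)
      | (rw [E_swap23]; exact sortedCase a₁ a₃ a₂ h₁ (by omega) (by omega) (by linarith))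
      | (rw [E_swap12]; exact sortedCase a₂ a₁ a₃ h₂ (by omega) (by omega) (by linarith))
      | (rw [E_swap12, E_swap23]; exact sortedCase a₂ a₃ a₁ h₂ (by omega) (by omega) (by linarith))
      | (rw [E_swap23, E_swap12]; exact sortedCase a₃ a₁ a₂ h₃ (by omega) (by omega) (by linarith))
      | (rw [E_swap12, E_swap23, E_swap12];
         exact sortedCase a₃ a₂ a₁ h₃ (by omega) (by omega) (by linarith))
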